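/- With unit activation costs, the price of anarchy of the coordination mechanism is at most 2: for any Nash equilibrium (s, ξ) and any optimal assignment s*, the total cost of s is at most twice the number of slots occupied in s*. -/

import Mathlib

/-- Number of jobs declaring slot `t`. -/
def load {n : ℕ} (s : Fin n → ℤ) (t : ℤ) : ℕ :=
  (Finset.univ.filter fun j => s j = t).card

/-- Total declared payment on slot `t`. -/
def pay {n : ℕ} (s : Fin n → ℤ) (ξ : Fin n → ℝ) (t : ℤ) : ℝ :=
  ∑ j ∈ Finset.univ.filter (fun j => s j = t), ξ j

/-- Unit activation cost: `c 0 = 0` and `c l = 1` for `l ≥ 1`. -/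
def unitCost (l : ℕ) : ℝ := if l = 0 then 0 else 1

/-- Total cost of an assignment with unit activation costs: the number of
occupied slots. -/
def occupied {n : ℕ} (s : Fin n → ℤ) : ℕ := (Finset.univ.image s).card
theorem mechanism_poa_le_two {n : ℕ}
    (r e : Fin n → ℤ) (s : Fin n → ℤ) (ξ : Fin n → ℝ)
    (hwin : ∀ j, s j ∈ Finset.Icc (r j) (e j))
    (hξ : ∀ j, 0 ≤ ξ j)
    (hopen : ∀ j, unitCost (load s (s j)) ≤ pay s ξ (s j))
    (hdev : ∀ j, ∀ t ∈ Finset.Icc (r j) (e j), t ≠ s j →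
      ξ j ≤ max 0 (unitCost (load s t + 1) - pay s ξ t))
    (hnec : ∀ j, ξ j ≤ max 0 (unitCost (load s (s j)) - (pay s ξ (s j) - ξ j)))
    (sstar : Fin n → ℤ)
    (hstarwin : ∀ j, sstar j ∈ Finset.Icc (r j) (e j))
    (hstaropt : ∀ s' : Fin n → ℤ, (∀ j, s' j ∈ Finset.Icc (r j) (e j)) →
      occupied sstar ≤ occupied s') :
    occupied s ≤ 2 * occupied sstar := by
  classical
  -- every occupied slot has load ≠ 0
  have hload : ∀ t : ℤ, load s t ≠ 0 ↔ ∃ j, s j = t := by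
    intro t
    unfold load
    rw [← Nat.pos_iff_ne_zero, Finset.card_pos, Finset.filter_nonempty_iff]
    simp
  have hpay_ge : ∀ t : ℤ, load s t ≠ 0 → 1 ≤ pay s ξ t := by
    intro t ht
    obtain ⟨j, hj⟩ := (hload t).mp ht
    have := hopen j
    rw [hj] at this
    rwa [unitCost, if_neg ht] at this
  have hpay_le : ∀ t : ℤ, load s t ≠ 0 → pay s ξ t ≤ 1 := by
    intro t ht
    have h1 := hpay_ge t ht
    have hpos : (0 : ℝ) < ∑ j ∈ Finset.univ.filter (fun j => s j = t), ξ j := by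
      have : pay s ξ t > 0 := by linarith
      simpa [pay] using this
    obtain ⟨j1, hj1, hj1pos⟩ : ∃ j1 ∈ Finset.univ.filter (fun j => s j = t), 0 < ξ j1 := by
      by_contra hcon
      push_neg at hcon
      have : ∑ j ∈ Finset.univ.filter (fun j => s j = t), ξ j ≤ 0 :=
        Finset.sum_nonpos hcon
      linarith
    have hj1t : s j1 = t := (Finset.mem_filter.mp hj1).2
    have := hnec j1
    rw [hj1t, unitCost, if_neg ht] at this
    rcases le_max_iff.mp this with h | h
    · linarith
    · linarith
  -- a job deviating to an occupied slot in its window pays 0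
  have hξzero : ∀ j, ∀ t ∈ Finset.Icc (r j) (e j), t ≠ s j → load s t ≠ 0 → ξ j = 0 := by
    intro j t ht hne hl
    have hd := hdev j t ht hne
    have h1 := hpay_ge t hl
    rw [unitCost, if_neg (Nat.succ_ne_zero _)] at hd
    have : ξ j ≤ 0 := by
      rcases le_max_iff.mp hd with h | h
      · exact h
      · linarith
    linarith [hξ j]
  -- key lemma: a group of jobs that can all deviate to an occupied slot u pays ≤ 1
  have hkey : ∀ (F : Finset (Fin n)) (u : ℤ), load s u ≠ 0 →
      (∀ j ∈ F, s j ≠ u → u ∈ Finset.Icc (r j) (e j)) → ∑ j ∈ F, ξ j ≤ 1 := by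
    intro F u hu hmem
    rw [← Finset.sum_filter_add_sum_filter_not F (fun j => s j = u)]
    have h2 : ∑ j ∈ F.filter (fun j => ¬ s j = u), ξ j = 0 := by
      apply Finset.sum_eq_zero
      intro j hj
      obtain ⟨hjF, hjne⟩ := Finset.mem_filter.mp hj
      exact hξzero j u (hmem j hjF hjne) (fun h => hjne h.symm) hu
    have h1 : ∑ j ∈ F.filter (fun j => s j = u), ξ j ≤ pay s ξ u := by
      unfold pay
      apply Finset.sum_le_sum_of_subset_of_nonneg
      · intro j hj
        simp only [Finset.mem_filter, Finset.mem_univ, true_and] at *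
        exact hj.2
      · intro j _ _; exact hξ j
    have := hpay_le u hu
    linarith
  -- group bound: jobs with optimal slot t pay at most 2 in total
  have hgroup : ∀ t : ℤ, ∑ j ∈ Finset.univ.filter (fun j => sstar j = t), ξ j ≤ 2 := by
    intro t
    set G := Finset.univ.filter (fun j => sstar j = t) with hG
    have hGmem : ∀ j ∈ G, sstar j = t := fun j hj => (Finset.mem_filter.mp hj).2
    by_cases hl : load s t = 0
    · -- t is unoccupied in s; split by side
      have hnot : ∀ j, s j ≠ t := by
        intro j hj
        exact ((hload t).mpr ⟨j, hj⟩) hl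
      -- upper side
      have hup : ∑ j ∈ G.filter (fun j => t < s j), ξ j ≤ 1 := by
        set F := G.filter (fun j => t < s j) with hF
        rcases F.eq_empty_or_nonempty with h | hne
        · rw [h]; simp
        · have hine : (F.image s).Nonempty := hne.image s
          obtain ⟨j0, hj0F, hj0⟩ := Finset.mem_image.mp ((F.image s).min'_mem hine)
          have huocc : load s ((F.image s).min' hine) ≠ 0 := (hload _).mpr ⟨j0, hj0⟩
          have htu : t < (F.image s).min' hine := hj0 ▸ (Finset.mem_filter.mp hj0F).2
          apply hkey F _ huocc
          intro j hjF _
          have hjle : (F.image s).min' hine ≤ s j := Finset.min'_le _ _ (Finset.mem_image_of_mem s hjF)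
          have hjG : j ∈ G := (Finset.mem_filter.mp hjF).1
          have hst := hstarwin j
          rw [hGmem j hjG] at hst
          obtain ⟨hrt, _⟩ := Finset.mem_Icc.mp hst
          obtain ⟨_, hse⟩ := Finset.mem_Icc.mp (hwin j)
          exact Finset.mem_Icc.mpr ⟨le_trans hrt (le_of_lt htu), le_trans hjle hse⟩
      -- lower side
      have hdown : ∑ j ∈ G.filter (fun j => s j < t), ξ j ≤ 1 := by
        set F := G.filter (fun j => s j < t) with hF
        rcases F.eq_empty_or_nonempty with h | hne
        · rw [h]; simp
        · have hine : (F.image s).Nonempty := hne.image s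
          obtain ⟨j0, hj0F, hj0⟩ := Finset.mem_image.mp ((F.image s).max'_mem hine)
          have huocc : load s ((F.image s).max' hine) ≠ 0 := (hload _).mpr ⟨j0, hj0⟩
          have htu : (F.image s).max' hine < t := hj0 ▸ (Finset.mem_filter.mp hj0F).2
          apply hkey F _ huocc
          intro j hjF _
          have hjle : s j ≤ (F.image s).max' hine := Finset.le_max' _ _ (Finset.mem_image_of_mem s hjF)
          have hjG : j ∈ G := (Finset.mem_filter.mp hjF).1
          have hst := hstarwin j
          rw [hGmem j hjG] at hst
          obtain ⟨_, hte⟩ := Finset.mem_Icc.mp hst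
          obtain ⟨hrs, _⟩ := Finset.mem_Icc.mp (hwin j)
          exact Finset.mem_Icc.mpr ⟨le_trans hrs hjle, le_trans (le_of_lt htu) hte⟩
      have hGsplit : G = G.filter (fun j => t < s j) ∪ G.filter (fun j => s j < t) := by
        ext j
        simp only [Finset.mem_union, Finset.mem_filter]
        constructor
        · intro hj
          rcases lt_trichotomy t (s j) with h | h | h
          · exact Or.inl ⟨hj, h⟩
          · exact absurd h.symm (hnot j)
          · exact Or.inr ⟨hj, h⟩
        · rintro (⟨hj, _⟩ | ⟨hj, _⟩) <;> exact hj
      have hdisj : Disjoint (G.filter (fun j => t < s j)) (G.filter (fun j => s j < t)) := by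
        rw [Finset.disjoint_left]
        intro j h1 h2
        have ha := (Finset.mem_filter.mp h1).2
        have hb := (Finset.mem_filter.mp h2).2
        omega
      have hsum : ∑ j ∈ G, ξ j = ∑ j ∈ G.filter (fun j => t < s j), ξ j
          + ∑ j ∈ G.filter (fun j => s j < t), ξ j := by
        nth_rewrite 1 [hGsplit]
        exact Finset.sum_union hdisj
      rw [hsum]
      linarith
    · -- t is occupied in s
      have h1 : ∑ j ∈ G, ξ j ≤ 1 := by
        apply hkey G t hl
        intro j hjG _
        rw [← hGmem j hjG]
        exact hstarwin j
      linarith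
  -- total payments equal/ bound
  have htot1 : (occupied s : ℝ) ≤ ∑ j, ξ j := by
    have hmaps : ∀ j : Fin n, j ∈ Finset.univ → s j ∈ Finset.univ.image s :=
      fun j _ => Finset.mem_image_of_mem s (Finset.mem_univ j)
    have hfib := Finset.sum_fiberwise_of_maps_to hmaps ξ
    have : (occupied s : ℝ) = ∑ t ∈ Finset.univ.image s, (1 : ℝ) := by
      simp [occupied]
    rw [this, ← hfib]
    apply Finset.sum_le_sum
    intro t ht
    obtain ⟨j, _, hj⟩ := Finset.mem_image.mp ht
    exact hpay_ge t ((hload t).mpr ⟨j, hj⟩)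
  have htot2 : ∑ j, ξ j ≤ 2 * (occupied sstar : ℝ) := by
    have hmaps : ∀ j : Fin n, j ∈ Finset.univ → sstar j ∈ Finset.univ.image sstar :=
      fun j _ => Finset.mem_image_of_mem sstar (Finset.mem_univ j)
    have hfib := Finset.sum_fiberwise_of_maps_to hmaps ξ
    rw [← hfib]
    calc ∑ t ∈ Finset.univ.image sstar, ∑ j ∈ Finset.univ.filter (fun j => sstar j = t), ξ j
        ≤ ∑ t ∈ Finset.univ.image sstar, (2 : ℝ) :=
          Finset.sum_le_sum (fun t _ => hgroup t)
      _ = 2 * (occupied sstar : ℝ) := by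
          simp [occupied, Finset.sum_const, nsmul_eq_mul, mul_comm]
  have : (occupied s : ℝ) ≤ 2 * (occupied sstar : ℝ) := le_trans htot1 htot2
  exact_mod_cast this
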